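/- The sum of the 3×3 principal minors of the energy–momentum endomorphism Q (the sum over all three-element subsets S of the index set of the determinant of the submatrix of Q on rows and columns S) equals 4·E₀·(E₀² − L²) + 8·V³. -/

import Mathlib

open Matrix Complex

/-- The energy–momentum endomorphism `Q` of an asymptotically anti-de Sitter
initial data set, as a 4×4 complex matrix. -/
noncomputable def QMatrix (E₀ c₁ c₂ c₃ c₁' c₂' c₃' J₁ J₂ J₃ : ℝ) :
    Matrix (Fin 4) (Fin 4) ℂ :=
  let w₁ : ℂ := (c₃' : ℂ) - I * J₃
  let w₂p : ℂ := -(c₁' : ℂ) + (J₂ : ℂ) + I * ((c₂' : ℂ) + J₁)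
  let w₂m : ℂ := -(c₁' : ℂ) - (J₂ : ℂ) - I * ((c₂' : ℂ) - J₁)
  !![(E₀ : ℂ) - c₃, (c₁ : ℂ) - I * c₂, w₁, w₂p;
     (c₁ : ℂ) + I * c₂, (E₀ : ℂ) + c₃, w₂m, -w₁;
     starRingEnd ℂ w₁, starRingEnd ℂ w₂m, (E₀ : ℂ) + c₃, -(c₁ : ℂ) + I * c₂;
     starRingEnd ℂ w₂p, -(starRingEnd ℂ w₁), -(c₁ : ℂ) - I * c₂, (E₀ : ℂ) - c₃]

/-- The sum of the 3×3 principal minors of the energy–momentum endomorphism `Q`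
equals `4·E₀·(E₀² − L²) + 8·V³`. -/
theorem third_minors_QMatrix (E₀ c₁ c₂ c₃ c₁' c₂' c₃' J₁ J₂ J₃ L V : ℝ)
    (hL0 : 0 ≤ L)
    (hL : L ^ 2 = ![c₁, c₂, c₃] ⬝ᵥ ![c₁, c₂, c₃]
      + ![c₁', c₂', c₃'] ⬝ᵥ ![c₁', c₂', c₃'] + ![J₁, J₂, J₃] ⬝ᵥ ![J₁, J₂, J₃])
    (hV : V ^ 3 = ![c₁, c₂, c₃] ⬝ᵥ (![c₁', c₂', c₃'] ⨯₃ ![J₁, J₂, J₃])) :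
    ∑ p ∈ Finset.univ.filter
        (fun p : Fin 4 × Fin 4 × Fin 4 => p.1 < p.2.1 ∧ p.2.1 < p.2.2),
        ((QMatrix E₀ c₁ c₂ c₃ c₁' c₂' c₃' J₁ J₂ J₃).submatrix
          ![p.1, p.2.1, p.2.2] ![p.1, p.2.1, p.2.2]).det
      = ((4 * E₀ * (E₀ ^ 2 - L ^ 2) + 8 * V ^ 3 : ℝ) : ℂ) := by
  simp only [dotProduct, cross_apply, Fin.sum_univ_three, Matrix.cons_val_zero,
    Matrix.cons_val_one, Matrix.head_cons, Matrix.cons_val_two, Matrix.tail_cons] at hL hV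
  rw [show (Finset.univ.filter
        (fun p : Fin 4 × Fin 4 × Fin 4 => p.1 < p.2.1 ∧ p.2.1 < p.2.2)) =
      {(0,1,2),(0,1,3),(0,2,3),(1,2,3)} from by decide]
  simp only [Matrix.det_fin_three]
  simp [QMatrix, Matrix.det_fin_three, Finset.sum_insert, Complex.ext_iff, hL, hV,
    ← Complex.ofReal_pow]
  ring_nf
  constructor <;> trivial
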